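/- arXiv:1304.6219 — 2 statements merged into one kernel-verified Lean document; each statement's English description precedes it below -/
import Mathlib

section
/- Let φ₀ ∈ ℂ^N ⊗ ℂ^M be a fixed unit vector with local purity π₀ = Tr((Tr_B |φ₀⟩⟨φ₀|)²), and let φ be a Gaussian random vector in ℂ^N ⊗ ℂ^M with i.i.d. components of mean 0 and variance 1/(NM). For ε ∈ [0,1], set ψ = ε φ₀ + √(1−ε²) φ. Then the expectation of the purity Tr((Tr_B |ψ⟩⟨ψ|)²) equals ε⁴ π₀ + (1−ε⁴)(M+N)/(MN). -/
open MeasureTheory ProbabilityTheory Finset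
open scoped ENNReal

section AuxPurity
variable {Ω : Type*} [MeasurableSpace Ω] {μ : Measure Ω}

private lemma aux_memLp_mul {p q r : ℝ≥0∞} {f g : Ω → ℂ} (hf : MemLp f q μ) (hg : MemLp g r μ)
    (h : 1/p = 1/q + 1/r) : MemLp (fun ω => f ω * g ω) p μ := by
  exact hg.smul hf (hpqr := ⟨by simpa [one_div] using h.symm⟩)

private lemma aux_memLp2_mul {f g : Ω → ℂ} (hf : MemLp f 4 μ) (hg : MemLp g 4 μ) :
    MemLp (fun ω => f ω * g ω) 2 μ :=
  aux_memLp_mul hf hg (by rw [ENNReal.div_add_div_same, ENNReal.div_eq_div_iff] <;> norm_num)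

private lemma aux_integrable_mul {f g : Ω → ℂ} (hf : MemLp f 2 μ) (hg : MemLp g 2 μ) :
    Integrable (fun ω => f ω * g ω) μ :=
  (aux_memLp_mul hf hg
    (by rw [ENNReal.div_add_div_same, ENNReal.div_eq_div_iff] <;> norm_num))
    |> memLp_one_iff_integrable.mp

private lemma aux_memLp_star {p : ℝ≥0∞} {f : Ω → ℂ} (hf : MemLp f p μ) :
    MemLp (fun ω => star (f ω)) p μ := by
  apply hf.of_le_mul (c := 1)
  · exact continuous_star.comp_aestronglyMeasurable hf.aestronglyMeasurable
  · exact Filter.Eventually.of_forall (fun ω => by simp)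

private lemma aux_memLp_sum {ι : Type*} [Fintype ι] {p : ℝ≥0∞} (f : ι → Ω → ℂ)
    (h : ∀ i, MemLp (f i) p μ) : MemLp (fun ω => ∑ i, f i ω) p μ := by
  have h2 := memLp_finset_sum' (μ := μ) (p := p) Finset.univ (fun i (_ : i ∈ Finset.univ) => h i)
  have : (∑ i, f i) = fun ω => ∑ i, f i ω := by funext ω; simp
  rwa [this] at h2

private lemma aux_integral_add4 {f1 f2 f3 f4 : Ω → ℂ}
    (h1 : Integrable f1 μ) (h2 : Integrable f2 μ) (h3 : Integrable f3 μ) (h4 : Integrable f4 μ) :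
    ∫ ω, f1 ω + f2 ω + f3 ω + f4 ω ∂μ
      = (∫ ω, f1 ω ∂μ) + (∫ ω, f2 ω ∂μ) + (∫ ω, f3 ω ∂μ) + ∫ ω, f4 ω ∂μ := by
  have h12 : Integrable (fun ω => f1 ω + f2 ω) μ := h1.add h2
  have h123 : Integrable (fun ω => f1 ω + f2 ω + f3 ω) μ := h12.add h3
  rw [integral_add h123 h4, integral_add h12 h3, integral_add h1 h2]

private lemma aux_integral_add9 {f1 f2 f3 f4 f5 f6 f7 f8 f9 : Ω → ℂ}
    (h1 : Integrable f1 μ) (h2 : Integrable f2 μ) (h3 : Integrable f3 μ) (h4 : Integrable f4 μ)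
    (h5 : Integrable f5 μ) (h6 : Integrable f6 μ) (h7 : Integrable f7 μ) (h8 : Integrable f8 μ)
    (h9 : Integrable f9 μ) :
    ∫ ω, f1 ω + f2 ω + f3 ω + f4 ω + f5 ω + f6 ω + f7 ω + f8 ω + f9 ω ∂μ
      = (∫ ω, f1 ω ∂μ) + (∫ ω, f2 ω ∂μ) + (∫ ω, f3 ω ∂μ) + (∫ ω, f4 ω ∂μ) + (∫ ω, f5 ω ∂μ)
        + (∫ ω, f6 ω ∂μ) + (∫ ω, f7 ω ∂μ) + (∫ ω, f8 ω ∂μ) + ∫ ω, f9 ω ∂μ := by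
  have p2 : Integrable (fun ω => f1 ω + f2 ω) μ := h1.add h2
  have p3 : Integrable (fun ω => f1 ω + f2 ω + f3 ω) μ := p2.add h3
  have p4 : Integrable (fun ω => f1 ω + f2 ω + f3 ω + f4 ω) μ := p3.add h4
  have p5 : Integrable (fun ω => f1 ω + f2 ω + f3 ω + f4 ω + f5 ω) μ := p4.add h5
  have p6 : Integrable (fun ω => f1 ω + f2 ω + f3 ω + f4 ω + f5 ω + f6 ω) μ := p5.add h6
  have p7 : Integrable (fun ω => f1 ω + f2 ω + f3 ω + f4 ω + f5 ω + f6 ω + f7 ω) μ := p6.add h7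
  have p8 : Integrable (fun ω => f1 ω + f2 ω + f3 ω + f4 ω + f5 ω + f6 ω + f7 ω + f8 ω) μ :=
    p7.add h8
  rw [integral_add p8 h9, integral_add p7 h8, integral_add p6 h7, integral_add p5 h6,
    integral_add p4 h5, integral_add p3 h4, integral_add p2 h3, integral_add h1 h2]

private lemma aux_indep_integral_mul {f g : Ω → ℂ} (h : IndepFun f g μ)
    (hf : Integrable f μ) (hg : Integrable g μ) :
    ∫ ω, f ω * g ω ∂μ = (∫ ω, f ω ∂μ) * ∫ ω, g ω ∂μ := by
  have hfr : Integrable (fun ω => (f ω).re) μ := hf.re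
  have hfi : Integrable (fun ω => (f ω).im) μ := hf.im
  have hgr : Integrable (fun ω => (g ω).re) μ := hg.re
  have hgi : Integrable (fun ω => (g ω).im) μ := hg.im
  have h11 := (h.comp Complex.measurable_re Complex.measurable_re)
  have h12 := (h.comp Complex.measurable_re Complex.measurable_im)
  have h21 := (h.comp Complex.measurable_im Complex.measurable_re)
  have h22 := (h.comp Complex.measurable_im Complex.measurable_im)
  have p11 : Integrable (fun ω => (f ω).re * (g ω).re) μ := h11.integrable_mul hfr hgr
  have p12 : Integrable (fun ω => (f ω).re * (g ω).im) μ := h12.integrable_mul hfr hgi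
  have p21 : Integrable (fun ω => (f ω).im * (g ω).re) μ := h21.integrable_mul hfi hgr
  have p22 : Integrable (fun ω => (f ω).im * (g ω).im) μ := h22.integrable_mul hfi hgi
  have e11 : ∫ ω, (f ω).re * (g ω).re ∂μ = (∫ ω, (f ω).re ∂μ) * ∫ ω, (g ω).re ∂μ :=
    h11.integral_fun_mul_eq_mul_integral hfr.aestronglyMeasurable hgr.aestronglyMeasurable
  have e12 : ∫ ω, (f ω).re * (g ω).im ∂μ = (∫ ω, (f ω).re ∂μ) * ∫ ω, (g ω).im ∂μ :=
    h12.integral_fun_mul_eq_mul_integral hfr.aestronglyMeasurable hgi.aestronglyMeasurable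
  have e21 : ∫ ω, (f ω).im * (g ω).re ∂μ = (∫ ω, (f ω).im ∂μ) * ∫ ω, (g ω).re ∂μ :=
    h21.integral_fun_mul_eq_mul_integral hfi.aestronglyMeasurable hgr.aestronglyMeasurable
  have e22 : ∫ ω, (f ω).im * (g ω).im ∂μ = (∫ ω, (f ω).im ∂μ) * ∫ ω, (g ω).im ∂μ :=
    h22.integral_fun_mul_eq_mul_integral hfi.aestronglyMeasurable hgi.aestronglyMeasurable
  have key : (fun ω => f ω * g ω) = fun ω =>
      (((f ω).re * (g ω).re - (f ω).im * (g ω).im : ℝ) : ℂ)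
      + (((f ω).re * (g ω).im + (f ω).im * (g ω).re : ℝ) : ℂ) * Complex.I := by
    funext ω
    apply Complex.ext <;> simp [Complex.mul_re, Complex.mul_im]
  have h1 : Integrable (fun ω => (((f ω).re * (g ω).re - (f ω).im * (g ω).im : ℝ) : ℂ)) μ :=
    (p11.sub p22).ofReal
  have h2 : Integrable (fun ω =>
      (((f ω).re * (g ω).im + (f ω).im * (g ω).re : ℝ) : ℂ) * Complex.I) μ :=
    ((p12.add p21).ofReal).mul_const _
  have hprod : Integrable (fun ω => f ω * g ω) μ := by rw [key]; exact h1.add h2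
  have hre : ∀ {u : Ω → ℂ}, Integrable u μ → ∫ ω, (u ω).re ∂μ = (∫ ω, u ω ∂μ).re :=
    fun hu => by simpa using integral_re hu
  have him : ∀ {u : Ω → ℂ}, Integrable u μ → ∫ ω, (u ω).im ∂μ = (∫ ω, u ω ∂μ).im :=
    fun hu => by simpa using integral_im hu
  apply Complex.ext
  · rw [← hre hprod]
    have : ∫ ω, (f ω * g ω).re ∂μ
        = ∫ ω, ((f ω).re * (g ω).re - (f ω).im * (g ω).im) ∂μ := by
      apply integral_congr_ae (Filter.Eventually.of_forall fun ω => ?_)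
      simp [Complex.mul_re]
    rw [this, integral_sub p11 p22, e11, e22, hre hf, hre hg, him hf, him hg, Complex.mul_re]
  · rw [← him hprod]
    have : ∫ ω, (f ω * g ω).im ∂μ
        = ∫ ω, ((f ω).re * (g ω).im + (f ω).im * (g ω).re) ∂μ := by
      apply integral_congr_ae (Filter.Eventually.of_forall fun ω => ?_)
      simp [Complex.mul_im]
    rw [this, integral_add p12 p21, e12, e21, hre hf, hre hg, him hf, him hg, Complex.mul_im]

end AuxPurity

/-- For a fixed unit vector `φ₀` in `ℂ^N ⊗ ℂ^M` with local purity `π₀`, and a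
Gaussian random vector `φ` with i.i.d. complex Gaussian components of mean 0, vanishing
pseudo-variance and odd moments, variance `1/(NM)` (hence fourth moment `2/(NM)²`),
the expected local purity of `ψ = ε φ₀ + √(1-ε²) φ` is `ε⁴ π₀ + (1-ε⁴)(M+N)/(MN)`.
Here the local purity of a vector `v` is `Tr((Tr_B vv*)²) = ∑_{i,j} ‖∑_μ v_{iμ} conj(v_{jμ})‖²`. -/
theorem polarized_average_purity {Ω : Type*} [MeasurableSpace Ω] {μ : Measure Ω}
    [IsProbabilityMeasure μ] (N M : ℕ) (hN : 0 < N) (hM : 0 < M) (hNM : N ≤ M)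
    (purity : (Fin N × Fin M → ℂ) → ℝ)
    (hpurity : ∀ v, purity v
      = ∑ i : Fin N, ∑ j : Fin N, ‖∑ m : Fin M, v (i, m) * star (v (j, m))‖ ^ 2)
    (φ₀ : Fin N × Fin M → ℂ) (hφ₀ : ∑ a : Fin N × Fin M, ‖φ₀ a‖ ^ 2 = 1)
    (π₀ : ℝ) (hπ₀ : π₀ = purity φ₀)
    (X : Fin N × Fin M → Ω → ℂ)
    (hmeas : ∀ a, Measurable (X a))
    (hindep : iIndepFun X μ)
    (hL4 : ∀ a, MemLp (X a) 4 μ)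
    (hmean : ∀ a, ∫ ω, X a ω ∂μ = 0)
    (hpseudo : ∀ a, ∫ ω, X a ω * X a ω ∂μ = 0)
    (hodd1 : ∀ a, ∫ ω, X a ω * X a ω * star (X a ω) ∂μ = 0)
    (hodd2 : ∀ a, ∫ ω, X a ω * star (X a ω) * star (X a ω) ∂μ = 0)
    (hvar : ∀ a, ∫ ω, X a ω * star (X a ω) ∂μ = 1 / ((N : ℂ) * M))
    (hfourth : ∀ a, ∫ ω, X a ω * star (X a ω) * X a ω * star (X a ω) ∂μ
      = 2 / ((N : ℂ) * M) ^ 2)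
    (ε : ℝ) (hε0 : 0 ≤ ε) (hε1 : ε ≤ 1)
    (ψ : Ω → Fin N × Fin M → ℂ)
    (hψ : ∀ ω a, ψ ω a = (ε : ℂ) * φ₀ a + (Real.sqrt (1 - ε ^ 2) : ℂ) * X a ω) :
    ∫ ω, purity (ψ ω) ∂μ
      = ε ^ 4 * π₀ + (1 - ε ^ 4) * (((M : ℝ) + N) / ((M : ℝ) * N)) := by
  classical
  set εc : ℂ := ((ε : ℝ) : ℂ) with hεc
  set sR : ℝ := Real.sqrt (1 - ε ^ 2) with hsRdef
  set sc : ℂ := ((sR : ℝ) : ℂ) with hsc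
  set w : ℂ := 1 / ((N : ℂ) * M) with hw
  set Y : Fin N × Fin M → Ω → ℂ := fun a ω => εc * φ₀ a + sc * X a ω with hYdef
  set Qf : Fin N × Fin M → ℂ := fun a => φ₀ a * star (φ₀ a) with hQf
  set v : Fin N × Fin M → ℂ := fun a => εc ^ 2 * Qf a + sc ^ 2 * w with hv
  have hsR2 : sR ^ 2 = 1 - ε ^ 2 := Real.sq_sqrt (by nlinarith)
  have hstarY : ∀ a ω, star (Y a ω) = εc * star (φ₀ a) + sc * star (X a ω) := by
    intro a ω
    simp [hYdef, hεc, hsc, star_add, star_mul', Complex.star_def, map_add, map_mul,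
      Complex.conj_ofReal]
  -- integrability facts
  have hXint : ∀ a, Integrable (X a) μ := fun a => (hL4 a).integrable (by norm_num)
  have hXs4 : ∀ a, MemLp (fun ω => star (X a ω)) 4 μ := fun a => aux_memLp_star (hL4 a)
  have hXsint : ∀ a, Integrable (fun ω => star (X a ω)) μ :=
    fun a => (hXs4 a).integrable (by norm_num)
  have hX2 : ∀ a, MemLp (X a) 2 μ := fun a => (hL4 a).mono_exponent (by norm_num)
  have hXs2 : ∀ a, MemLp (fun ω => star (X a ω)) 2 μ :=
    fun a => (hXs4 a).mono_exponent (by norm_num)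
  have hY4 : ∀ a, MemLp (Y a) 4 μ := fun a => (memLp_const (εc * φ₀ a)).add ((hL4 a).const_mul sc)
  have hYs4 : ∀ a, MemLp (fun ω => star (Y a ω)) 4 μ := fun a => aux_memLp_star (hY4 a)
  have hY2 : ∀ a, MemLp (Y a) 2 μ := fun a => (hY4 a).mono_exponent (by norm_num)
  have hYs2 : ∀ a, MemLp (fun ω => star (Y a ω)) 2 μ :=
    fun a => (hYs4 a).mono_exponent (by norm_num)
  have hYint : ∀ a, Integrable (Y a) μ := fun a => (hY4 a).integrable (by norm_num)
  have hYsint : ∀ a, Integrable (fun ω => star (Y a ω)) μ :=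
    fun a => (hYs4 a).integrable (by norm_num)
  have hP2 : ∀ a b, MemLp (fun ω => Y a ω * star (Y b ω)) 2 μ :=
    fun a b => aux_memLp2_mul (hY4 a) (hYs4 b)
  have hPint : ∀ a b, Integrable (fun ω => Y a ω * star (Y b ω)) μ :=
    fun a b => aux_integrable_mul (hY2 a) (hYs2 b)
  have hPPint : ∀ a b c d, Integrable
      (fun ω => (Y a ω * star (Y b ω)) * (Y c ω * star (Y d ω))) μ :=
    fun a b c d => aux_integrable_mul (hP2 a b) (hP2 c d)
  -- conjugated moments of X
  have hXs1 : ∀ a, ∫ ω, star (X a ω) ∂μ = 0 := by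
    intro a
    have h1 : ∫ ω, (starRingEnd ℂ) (X a ω) ∂μ = (starRingEnd ℂ) (∫ ω, X a ω ∂μ) := integral_conj
    rw [hmean a] at h1
    simpa [Complex.star_def] using h1
  have hXs2' : ∀ a, ∫ ω, star (X a ω) * star (X a ω) ∂μ = 0 := by
    intro a
    have h1 : ∫ ω, (starRingEnd ℂ) (X a ω * X a ω) ∂μ
        = (starRingEnd ℂ) (∫ ω, X a ω * X a ω ∂μ) := integral_conj
    rw [hpseudo a] at h1
    simpa [Complex.star_def, map_mul] using h1
  -- first moments of Y
  have m1 : ∀ a, ∫ ω, Y a ω ∂μ = εc * φ₀ a := by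
    intro a
    have hconst : Integrable (fun _ : Ω => εc * φ₀ a) μ := integrable_const _
    have hlin : Integrable (fun ω => sc * X a ω) μ := (hXint a).const_mul sc
    simp only [hYdef]
    rw [integral_add hconst hlin, integral_const, integral_const_mul, hmean a]
    simp
  have m1s : ∀ a, ∫ ω, star (Y a ω) ∂μ = εc * star (φ₀ a) := by
    intro a
    have h1 : ∫ ω, (starRingEnd ℂ) (Y a ω) ∂μ = (starRingEnd ℂ) (∫ ω, Y a ω ∂μ) := integral_conj
    rw [m1 a] at h1
    simpa [Complex.star_def, map_mul, hεc, Complex.conj_ofReal] using h1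
  -- second moment |Y|²
  have m2 : ∀ a, ∫ ω, Y a ω * star (Y a ω) ∂μ = v a := by
    intro a
    have expand : (fun ω => Y a ω * star (Y a ω)) = fun ω =>
        (εc ^ 2 * (φ₀ a * star (φ₀ a)) + (εc * sc * φ₀ a) * star (X a ω))
          + ((εc * sc * star (φ₀ a)) * X a ω + sc ^ 2 * (X a ω * star (X a ω))) := by
      funext ω
      rw [hstarY a ω]
      simp only [hYdef]
      ring
    have i1 : Integrable (fun _ : Ω => εc ^ 2 * (φ₀ a * star (φ₀ a))) μ := integrable_const _
    have i2 : Integrable (fun ω => (εc * sc * φ₀ a) * star (X a ω)) μ := (hXsint a).const_mul _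
    have i3 : Integrable (fun ω => (εc * sc * star (φ₀ a)) * X a ω) μ := (hXint a).const_mul _
    have i4 : Integrable (fun ω => sc ^ 2 * (X a ω * star (X a ω))) μ :=
      (aux_integrable_mul (hX2 a) (hXs2 a)).const_mul _
    have h12 : Integrable (fun ω => εc ^ 2 * (φ₀ a * star (φ₀ a))
        + (εc * sc * φ₀ a) * star (X a ω)) μ := i1.add i2
    have h34 : Integrable (fun ω => (εc * sc * star (φ₀ a)) * X a ω
        + sc ^ 2 * (X a ω * star (X a ω))) μ := i3.add i4
    rw [expand, integral_add h12 h34, integral_add i1 i2, integral_add i3 i4, integral_const,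
      integral_const_mul, integral_const_mul, integral_const_mul, hXs1 a, hmean a, hvar a]
    simp only [hv, hQf, hw]
    simp
  -- fourth moment |Y|⁴
  have m4 : ∀ a, ∫ ω, (Y a ω * star (Y a ω)) * (Y a ω * star (Y a ω)) ∂μ
      = εc ^ 4 * Qf a ^ 2 + 4 * εc ^ 2 * sc ^ 2 * Qf a * w + 2 * sc ^ 4 * w ^ 2 := by
    intro a
    have expand : (fun ω => (Y a ω * star (Y a ω)) * (Y a ω * star (Y a ω))) = fun ω =>
        εc ^ 4 * (φ₀ a * star (φ₀ a)) ^ 2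
        + (2 * εc ^ 3 * sc * (φ₀ a ^ 2 * star (φ₀ a))) * star (X a ω)
        + (2 * εc ^ 3 * sc * (φ₀ a * star (φ₀ a) ^ 2)) * X a ω
        + (εc ^ 2 * sc ^ 2 * φ₀ a ^ 2) * (star (X a ω) * star (X a ω))
        + (εc ^ 2 * sc ^ 2 * star (φ₀ a) ^ 2) * (X a ω * X a ω)
        + (4 * εc ^ 2 * sc ^ 2 * (φ₀ a * star (φ₀ a))) * (X a ω * star (X a ω))
        + (2 * εc * sc ^ 3 * φ₀ a) * (X a ω * star (X a ω) * star (X a ω))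
        + (2 * εc * sc ^ 3 * star (φ₀ a)) * (X a ω * X a ω * star (X a ω))
        + sc ^ 4 * ((X a ω * star (X a ω)) * (X a ω * star (X a ω))) := by
      funext ω
      rw [hstarY a ω]
      simp only [hYdef]
      ring
    have i1 : Integrable (fun _ : Ω => εc ^ 4 * (φ₀ a * star (φ₀ a)) ^ 2) μ := integrable_const _
    have i2 : Integrable (fun ω => (2 * εc ^ 3 * sc * (φ₀ a ^ 2 * star (φ₀ a)))
        * star (X a ω)) μ := (hXsint a).const_mul _
    have i3 : Integrable (fun ω => (2 * εc ^ 3 * sc * (φ₀ a * star (φ₀ a) ^ 2)) * X a ω) μ :=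
      (hXint a).const_mul _
    have i4 : Integrable (fun ω => (εc ^ 2 * sc ^ 2 * φ₀ a ^ 2)
        * (star (X a ω) * star (X a ω))) μ :=
      (aux_integrable_mul (hXs2 a) (hXs2 a)).const_mul _
    have i5 : Integrable (fun ω => (εc ^ 2 * sc ^ 2 * star (φ₀ a) ^ 2)
        * (X a ω * X a ω)) μ := (aux_integrable_mul (hX2 a) (hX2 a)).const_mul _
    have i6 : Integrable (fun ω => (4 * εc ^ 2 * sc ^ 2 * (φ₀ a * star (φ₀ a)))
        * (X a ω * star (X a ω))) μ := (aux_integrable_mul (hX2 a) (hXs2 a)).const_mul _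
    have i7 : Integrable (fun ω => (2 * εc * sc ^ 3 * φ₀ a)
        * (X a ω * star (X a ω) * star (X a ω))) μ :=
      (aux_integrable_mul (aux_memLp2_mul (hL4 a) (hXs4 a)) (hXs2 a)).const_mul _
    have i8 : Integrable (fun ω => (2 * εc * sc ^ 3 * star (φ₀ a))
        * (X a ω * X a ω * star (X a ω))) μ :=
      (aux_integrable_mul (aux_memLp2_mul (hL4 a) (hL4 a)) (hXs2 a)).const_mul _
    have i9 : Integrable (fun ω => sc ^ 4
        * ((X a ω * star (X a ω)) * (X a ω * star (X a ω)))) μ :=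
      (aux_integrable_mul (aux_memLp2_mul (hL4 a) (hXs4 a))
        (aux_memLp2_mul (hL4 a) (hXs4 a))).const_mul _
    have h9v : ∫ ω, (X a ω * star (X a ω)) * (X a ω * star (X a ω)) ∂μ
        = 2 / ((N : ℂ) * M) ^ 2 := by
      rw [show (fun ω => (X a ω * star (X a ω)) * (X a ω * star (X a ω)))
          = fun ω => X a ω * star (X a ω) * X a ω * star (X a ω) from
        funext fun ω => by ring]
      exact hfourth a
    rw [expand, aux_integral_add9 i1 i2 i3 i4 i5 i6 i7 i8 i9, integral_const,
      integral_const_mul, integral_const_mul, integral_const_mul, integral_const_mul,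
      integral_const_mul, integral_const_mul, integral_const_mul, integral_const_mul,
      hXs1 a, hmean a, hXs2' a, hpseudo a, hvar a, hodd2 a, hodd1 a, h9v]
    simp only [hQf, hw]
    simp only [probReal_univ, one_smul]
    ring
  -- independence helpers
  have hInd2 : ∀ (a b : Fin N × Fin M), a ≠ b → ∀ (f g : ℂ → ℂ), Measurable f → Measurable g →
      Integrable (fun ω => f (X a ω)) μ → Integrable (fun ω => g (X b ω)) μ →
      ∫ ω, f (X a ω) * g (X b ω) ∂μ = (∫ ω, f (X a ω) ∂μ) * ∫ ω, g (X b ω) ∂μ :=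
    fun a b hab f g hfm hgm hfi hgi =>
      aux_indep_integral_mul ((hindep.indepFun hab).comp hfm hgm) hfi hgi
  have hInd4 : ∀ (a b c d : Fin N × Fin M), a ≠ c → a ≠ d → b ≠ c → b ≠ d →
      ∀ (f g h k : ℂ → ℂ), Measurable f → Measurable g → Measurable h → Measurable k →
      Integrable (fun ω => f (X a ω) * g (X b ω)) μ →
      Integrable (fun ω => h (X c ω) * k (X d ω)) μ →
      ∫ ω, (f (X a ω) * g (X b ω)) * (h (X c ω) * k (X d ω)) ∂μ
        = (∫ ω, f (X a ω) * g (X b ω) ∂μ) * ∫ ω, h (X c ω) * k (X d ω) ∂μ := by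
    intro a b c d hac had hbc hbd f g h k hf hg hh hk h1 h2
    have hpair := hindep.indepFun_prodMk_prodMk hmeas a b c d hac had hbc hbd
    have hFm : Measurable (fun p : ℂ × ℂ => f p.1 * g p.2) :=
      (hf.comp measurable_fst).mul (hg.comp measurable_snd)
    have hGm : Measurable (fun p : ℂ × ℂ => h p.1 * k p.2) :=
      (hh.comp measurable_fst).mul (hk.comp measurable_snd)
    exact aux_indep_integral_mul (hpair.comp hFm hGm) h1 h2
  have hFm : ∀ a : Fin N × Fin M, Measurable (fun z : ℂ => εc * φ₀ a + sc * z) :=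
    fun a => measurable_const.add (measurable_id.const_mul sc)
  have hFsm : ∀ a : Fin N × Fin M, Measurable (fun z : ℂ => star (εc * φ₀ a + sc * z)) :=
    fun a => (continuous_star.measurable.comp (hFm a))
  have hQmeas : ∀ a : Fin N × Fin M,
      Measurable (fun z : ℂ => (εc * φ₀ a + sc * z) * star (εc * φ₀ a + sc * z)) :=
    fun a => (hFm a).mul ((continuous_star.measurable.comp (hFm a)))
  -- factorized pair values
  have hPij : ∀ a b, a ≠ b → ∫ ω, Y a ω * star (Y b ω) ∂μ
      = εc ^ 2 * (φ₀ a * star (φ₀ b)) := by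
    intro a b hab
    have e : ∫ ω, Y a ω * star (Y b ω) ∂μ = (∫ ω, Y a ω ∂μ) * ∫ ω, star (Y b ω) ∂μ :=
      hInd2 a b hab (fun z => εc * φ₀ a + sc * z) (fun z => star (εc * φ₀ b + sc * z))
        (hFm a) (hFsm b) (hYint a) (hYsint b)
    rw [e, m1 a, m1s b]
    ring
  have hPiiPjj : ∀ a b, a ≠ b →
      ∫ ω, (Y a ω * star (Y a ω)) * (Y b ω * star (Y b ω)) ∂μ = v a * v b := by
    intro a b hab
    have e : ∫ ω, (Y a ω * star (Y a ω)) * (Y b ω * star (Y b ω)) ∂μ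
        = (∫ ω, Y a ω * star (Y a ω) ∂μ) * ∫ ω, Y b ω * star (Y b ω) ∂μ :=
      hInd2 a b hab (fun z => (εc * φ₀ a + sc * z) * star (εc * φ₀ a + sc * z))
        (fun z => (εc * φ₀ b + sc * z) * star (εc * φ₀ b + sc * z))
        (hQmeas a) (hQmeas b) (hPint a a) (hPint b b)
    rw [e, m2 a, m2 b]
  have hQuad : ∀ a b c d : Fin N × Fin M, a ≠ c → a ≠ d → b ≠ c → b ≠ d →
      ∫ ω, (Y a ω * star (Y b ω)) * (Y c ω * star (Y d ω)) ∂μ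
        = (∫ ω, Y a ω * star (Y b ω) ∂μ) * ∫ ω, Y c ω * star (Y d ω) ∂μ := by
    intro a b c d hac had hbc hbd
    exact hInd4 a b c d hac had hbc hbd
      (fun z => εc * φ₀ a + sc * z) (fun z => star (εc * φ₀ b + sc * z))
      (fun z => εc * φ₀ c + sc * z) (fun z => star (εc * φ₀ d + sc * z))
      (hFm a) (hFsm b) (hFm c) (hFsm d) (hPint a b) (hPint c d)
  have hneS : ∀ (i j : Fin N) (m m' : Fin M), m ≠ m' →
      ((i, m) : Fin N × Fin M) ≠ (j, m') :=
    fun i j m m' h hcon => h (congrArg Prod.snd hcon)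
  have hneF : ∀ (i j : Fin N) (m m' : Fin M), i ≠ j →
      ((i, m) : Fin N × Fin M) ≠ (j, m') :=
    fun i j m m' h hcon => h (congrArg Prod.fst hcon)
  -- per-quadruple values
  have hval : ∀ (i j : Fin N) (m m' : Fin M),
      ∫ ω, (Y (i, m) ω * star (Y (j, m) ω)) * (Y (j, m') ω * star (Y (i, m') ω)) ∂μ
      = εc ^ 4 * ((φ₀ (i, m) * star (φ₀ (j, m))) * (φ₀ (j, m') * star (φ₀ (i, m'))))
        + (if m = m' then v (i, m) * v (j, m) - εc ^ 4 * (Qf (i, m) * Qf (j, m)) else 0)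
        + (if i = j then v (i, m) * v (i, m') - εc ^ 4 * (Qf (i, m) * Qf (i, m')) else 0) := by
    intro i j m m'
    rcases eq_or_ne m m' with rfl | hmm'
    · rcases eq_or_ne i j with rfl | hij
      · simp only [eq_self_iff_true, if_true]
        rw [m4 (i, m)]
        simp only [hv, hQf]
        ring
      · simp only [eq_self_iff_true, if_true, if_neg hij, add_zero]
        have comm : ∀ ω, (Y (i, m) ω * star (Y (j, m) ω)) * (Y (j, m) ω * star (Y (i, m) ω))
            = (Y (i, m) ω * star (Y (i, m) ω)) * (Y (j, m) ω * star (Y (j, m) ω)) :=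
          fun ω => by ring
        rw [integral_congr_ae (Filter.Eventually.of_forall comm),
          hPiiPjj (i, m) (j, m) (hneF i j m m hij)]
        simp only [hv, hQf]
        ring
    · rcases eq_or_ne i j with rfl | hij
      · simp only [if_neg hmm', eq_self_iff_true, if_true, add_zero, zero_add]
        rw [hPiiPjj (i, m) (i, m') (hneS i i m m' hmm')]
        simp only [hv, hQf]
        ring
      · simp only [if_neg hmm', if_neg hij, add_zero]
        rw [hQuad (i, m) (j, m) (j, m') (i, m')
            (hneS i j m m' hmm') (hneS i i m m' hmm')
            (hneS j j m m' hmm') (hneF j i m m' hij.symm),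
          hPij (i, m) (j, m) (hneF i j m m hij),
          hPij (j, m') (i, m') (hneF j i m' m' hij.symm)]
        ring
  -- the kernel A i j and its properties
  set A : Fin N → Fin N → Ω → ℂ := fun i j ω => ∑ m, Y (i, m) ω * star (Y (j, m) ω) with hA
  have hA2 : ∀ i j, MemLp (A i j) 2 μ :=
    fun i j => aux_memLp_sum _ (fun m => hP2 (i, m) (j, m))
  have hAs2 : ∀ i j, MemLp (fun ω => star (A i j ω)) 2 μ := fun i j => aux_memLp_star (hA2 i j)
  have hAAint : ∀ i j, Integrable (fun ω => A i j ω * star (A i j ω)) μ :=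
    fun i j => aux_integrable_mul (hA2 i j) (hAs2 i j)
  have hGint : Integrable (fun ω => ∑ i : Fin N, ∑ j : Fin N, A i j ω * star (A i j ω)) μ :=
    integrable_finset_sum _ fun i _ => integrable_finset_sum _ fun j _ => hAAint i j
  have hψY : ∀ ω a, ψ ω a = Y a ω := by
    intro ω a
    rw [hψ ω a]
  have hpure : ∀ ω, purity (ψ ω)
      = (∑ i : Fin N, ∑ j : Fin N, A i j ω * star (A i j ω)).re := by
    intro ω
    rw [hpurity]
    simp only [Complex.re_sum]
    refine Finset.sum_congr rfl fun i _ => Finset.sum_congr rfl fun j _ => ?_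
    have hz : ∀ z : ℂ, (z * star z).re = ‖z‖ ^ 2 := fun z => by
      rw [Complex.star_def, Complex.mul_conj, Complex.normSq_eq_norm_sq]
      norm_cast
    rw [hz]
    simp only [hA, hψY]
  -- step 2 : swap integral with the (i,j) sums
  have step2 : ∫ ω, (∑ i : Fin N, ∑ j : Fin N, A i j ω * star (A i j ω)) ∂μ
      = ∑ i : Fin N, ∑ j : Fin N, ∫ ω, A i j ω * star (A i j ω) ∂μ := by
    rw [integral_finset_sum _ (fun i _ => integrable_finset_sum _ fun j _ => hAAint i j)]
    exact Finset.sum_congr rfl fun i _ => integral_finset_sum _ (fun j _ => hAAint i j)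
  -- step 3 : expand A * star A into a quadruple sum
  have step3 : ∀ i j, ∫ ω, A i j ω * star (A i j ω) ∂μ
      = ∑ m : Fin M, ∑ m' : Fin M,
          ∫ ω, (Y (i, m) ω * star (Y (j, m) ω)) * (Y (j, m') ω * star (Y (i, m') ω)) ∂μ := by
    intro i j
    have expand : ∀ ω, A i j ω * star (A i j ω)
        = ∑ m : Fin M, ∑ m' : Fin M,
            (Y (i, m) ω * star (Y (j, m) ω)) * (Y (j, m') ω * star (Y (i, m') ω)) := by
      intro ω
      simp only [hA]
      rw [star_sum, Finset.sum_mul_sum]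
      exact Finset.sum_congr rfl fun m _ => Finset.sum_congr rfl fun m' _ => by
        rw [star_mul, star_star]
    rw [integral_congr_ae (Filter.Eventually.of_forall expand),
      integral_finset_sum _ (fun m _ => integrable_finset_sum _ fun m' _ => hPPint _ _ _ _)]
    exact Finset.sum_congr rfl fun m _ => integral_finset_sum _ (fun m' _ => hPPint _ _ _ _)
  -- sum of |φ₀|²
  have hQsum : ∑ a : Fin N × Fin M, Qf a = 1 := by
    have h1 : ∀ a, Qf a = ((‖φ₀ a‖ ^ 2 : ℝ) : ℂ) := fun a => by
      simp only [hQf]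
      rw [Complex.star_def, Complex.mul_conj, Complex.normSq_eq_norm_sq]
    calc ∑ a : Fin N × Fin M, Qf a = ∑ a : Fin N × Fin M, ((‖φ₀ a‖ ^ 2 : ℝ) : ℂ) :=
          Finset.sum_congr rfl fun a _ => h1 a
      _ = (((∑ a : Fin N × Fin M, ‖φ₀ a‖ ^ 2 : ℝ)) : ℂ) := by push_cast; ring
      _ = 1 := by rw [hφ₀]; norm_num
  have hQtot : ∑ i : Fin N, ∑ m : Fin M, Qf (i, m) = 1 := by
    rw [← Fintype.sum_prod_type]; exact hQsum
  have hsum_a : ∑ i : Fin N, ∑ j : Fin N, ∑ m : Fin M, Qf (i, m) = (N : ℂ) := by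
    calc ∑ i : Fin N, ∑ j : Fin N, ∑ m : Fin M, Qf (i, m)
        = ∑ i : Fin N, (N : ℂ) * ∑ m : Fin M, Qf (i, m) :=
          Finset.sum_congr rfl fun i _ => by
            rw [Finset.sum_const, Finset.card_univ, Fintype.card_fin, nsmul_eq_mul]
      _ = (N : ℂ) * ∑ i : Fin N, ∑ m : Fin M, Qf (i, m) := by rw [← Finset.mul_sum]
      _ = (N : ℂ) := by rw [hQtot, mul_one]
  have hsum_b : ∑ i : Fin N, ∑ j : Fin N, ∑ m : Fin M, Qf (j, m) = (N : ℂ) := by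
    calc ∑ i : Fin N, ∑ j : Fin N, ∑ m : Fin M, Qf (j, m)
        = ∑ _i : Fin N, (1 : ℂ) := Finset.sum_congr rfl fun i _ => hQtot
      _ = (N : ℂ) := by
          rw [Finset.sum_const, Finset.card_univ, Fintype.card_fin, nsmul_eq_mul, mul_one]
  have hsum_c : ∑ i : Fin N, ∑ m : Fin M, ∑ m' : Fin M, Qf (i, m) = (M : ℂ) := by
    calc ∑ i : Fin N, ∑ m : Fin M, ∑ m' : Fin M, Qf (i, m)
        = ∑ i : Fin N, ∑ m : Fin M, (M : ℂ) * Qf (i, m) :=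
          Finset.sum_congr rfl fun i _ => Finset.sum_congr rfl fun m _ => by
            rw [Finset.sum_const, Finset.card_univ, Fintype.card_fin, nsmul_eq_mul]
      _ = (M : ℂ) * ∑ i : Fin N, ∑ m : Fin M, Qf (i, m) := by
          simp only [← Finset.mul_sum]
      _ = (M : ℂ) := by rw [hQtot, mul_one]
  have hsum_d : ∑ i : Fin N, ∑ m : Fin M, ∑ m' : Fin M, Qf (i, m') = (M : ℂ) := by
    calc ∑ i : Fin N, ∑ m : Fin M, ∑ m' : Fin M, Qf (i, m')
        = ∑ i : Fin N, (M : ℂ) * ∑ m' : Fin M, Qf (i, m') :=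
          Finset.sum_congr rfl fun i _ => by
            rw [Finset.sum_const, Finset.card_univ, Fintype.card_fin, nsmul_eq_mul]
      _ = (M : ℂ) * ∑ i : Fin N, ∑ m' : Fin M, Qf (i, m') := by rw [← Finset.mul_sum]
      _ = (M : ℂ) := by rw [hQtot, mul_one]
  -- complex version of the purity of φ₀
  have hπ₀C : ∑ i : Fin N, ∑ j : Fin N,
      (∑ m, φ₀ (i, m) * star (φ₀ (j, m))) * star (∑ m, φ₀ (i, m) * star (φ₀ (j, m)))
      = ((π₀ : ℝ) : ℂ) := by
    rw [hπ₀, hpurity]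
    push_cast
    refine Finset.sum_congr rfl fun i _ => Finset.sum_congr rfl fun j _ => ?_
    rw [Complex.star_def, Complex.mul_conj, Complex.normSq_eq_norm_sq]
    norm_cast
  -- part 1
  have hT1 : ∑ i : Fin N, ∑ j : Fin N, ∑ m : Fin M, ∑ m' : Fin M,
      εc ^ 4 * ((φ₀ (i, m) * star (φ₀ (j, m))) * (φ₀ (j, m') * star (φ₀ (i, m'))))
      = εc ^ 4 * ((π₀ : ℝ) : ℂ) := by
    have inner : ∀ i j : Fin N, ∑ m : Fin M, ∑ m' : Fin M,
        εc ^ 4 * ((φ₀ (i, m) * star (φ₀ (j, m))) * (φ₀ (j, m') * star (φ₀ (i, m'))))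
        = εc ^ 4 * ((∑ m, φ₀ (i, m) * star (φ₀ (j, m)))
            * star (∑ m, φ₀ (i, m) * star (φ₀ (j, m)))) := by
      intro i j
      rw [star_sum, Finset.sum_mul_sum, Finset.mul_sum]
      refine Finset.sum_congr rfl fun m _ => ?_
      rw [Finset.mul_sum]
      refine Finset.sum_congr rfl fun m' _ => ?_
      rw [star_mul, star_star]
    calc ∑ i : Fin N, ∑ j : Fin N, ∑ m : Fin M, ∑ m' : Fin M,
        εc ^ 4 * ((φ₀ (i, m) * star (φ₀ (j, m))) * (φ₀ (j, m') * star (φ₀ (i, m'))))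
        = ∑ i : Fin N, ∑ j : Fin N, εc ^ 4 * ((∑ m, φ₀ (i, m) * star (φ₀ (j, m)))
            * star (∑ m, φ₀ (i, m) * star (φ₀ (j, m)))) :=
          Finset.sum_congr rfl fun i _ => Finset.sum_congr rfl fun j _ => inner i j
      _ = εc ^ 4 * ∑ i : Fin N, ∑ j : Fin N, (∑ m, φ₀ (i, m) * star (φ₀ (j, m)))
            * star (∑ m, φ₀ (i, m) * star (φ₀ (j, m))) := by
          simp only [← Finset.mul_sum]
      _ = εc ^ 4 * ((π₀ : ℝ) : ℂ) := by rw [hπ₀C]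
  -- part 2
  have hT2 : ∑ i : Fin N, ∑ j : Fin N, ∑ m : Fin M, ∑ m' : Fin M,
      (if m = m' then v (i, m) * v (j, m) - εc ^ 4 * (Qf (i, m) * Qf (j, m)) else 0)
      = 2 * N * (εc ^ 2 * sc ^ 2 * w) + (N * N * M) * (sc ^ 4 * w ^ 2) := by
    have h1 : ∀ i j : Fin N, ∑ m : Fin M, ∑ m' : Fin M,
        (if m = m' then v (i, m) * v (j, m) - εc ^ 4 * (Qf (i, m) * Qf (j, m)) else 0)
        = ∑ m : Fin M, (εc ^ 2 * sc ^ 2 * w * Qf (i, m) + εc ^ 2 * sc ^ 2 * w * Qf (j, m)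
            + sc ^ 4 * w ^ 2) := by
      intro i j
      refine Finset.sum_congr rfl fun m _ => ?_
      rw [Finset.sum_ite_eq]
      simp only [Finset.mem_univ, if_true, hv]
      ring
    calc ∑ i : Fin N, ∑ j : Fin N, ∑ m : Fin M, ∑ m' : Fin M,
        (if m = m' then v (i, m) * v (j, m) - εc ^ 4 * (Qf (i, m) * Qf (j, m)) else 0)
        = ∑ i : Fin N, ∑ j : Fin N, ∑ m : Fin M,
            (εc ^ 2 * sc ^ 2 * w * Qf (i, m) + εc ^ 2 * sc ^ 2 * w * Qf (j, m)
              + sc ^ 4 * w ^ 2) :=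
          Finset.sum_congr rfl fun i _ => Finset.sum_congr rfl fun j _ => h1 i j
      _ = (∑ i : Fin N, ∑ j : Fin N, ∑ m : Fin M, εc ^ 2 * sc ^ 2 * w * Qf (i, m))
          + (∑ i : Fin N, ∑ j : Fin N, ∑ m : Fin M, εc ^ 2 * sc ^ 2 * w * Qf (j, m))
          + (∑ i : Fin N, ∑ j : Fin N, ∑ m : Fin M, (sc ^ 4 * w ^ 2 : ℂ)) := by
          simp only [Finset.sum_add_distrib]
      _ = εc ^ 2 * sc ^ 2 * w * (∑ i : Fin N, ∑ j : Fin N, ∑ m : Fin M, Qf (i, m))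
          + εc ^ 2 * sc ^ 2 * w * (∑ i : Fin N, ∑ j : Fin N, ∑ m : Fin M, Qf (j, m))
          + ((N : ℂ) * N * M) * (sc ^ 4 * w ^ 2) := by
          simp only [← Finset.mul_sum, Finset.sum_const, Finset.card_univ, Fintype.card_fin,
            nsmul_eq_mul]
          ring
      _ = 2 * N * (εc ^ 2 * sc ^ 2 * w) + (N * N * M) * (sc ^ 4 * w ^ 2) := by
          rw [hsum_a, hsum_b]
          ring
  -- part 3
  have hT3 : ∑ i : Fin N, ∑ j : Fin N, ∑ m : Fin M, ∑ m' : Fin M,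
      (if i = j then v (i, m) * v (i, m') - εc ^ 4 * (Qf (i, m) * Qf (i, m')) else 0)
      = 2 * M * (εc ^ 2 * sc ^ 2 * w) + (N * M * M) * (sc ^ 4 * w ^ 2) := by
    have h1 : ∀ i j : Fin N, ∑ m : Fin M, ∑ m' : Fin M,
        (if i = j then v (i, m) * v (i, m') - εc ^ 4 * (Qf (i, m) * Qf (i, m')) else 0)
        = if i = j then ∑ m : Fin M, ∑ m' : Fin M,
            (v (i, m) * v (i, m') - εc ^ 4 * (Qf (i, m) * Qf (i, m'))) else 0 := by
      intro i j
      split_ifs <;> simp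
    calc ∑ i : Fin N, ∑ j : Fin N, ∑ m : Fin M, ∑ m' : Fin M,
        (if i = j then v (i, m) * v (i, m') - εc ^ 4 * (Qf (i, m) * Qf (i, m')) else 0)
        = ∑ i : Fin N, ∑ m : Fin M, ∑ m' : Fin M,
            (v (i, m) * v (i, m') - εc ^ 4 * (Qf (i, m) * Qf (i, m'))) := by
          refine Finset.sum_congr rfl fun i _ => ?_
          rw [Finset.sum_congr rfl fun j _ => h1 i j, Finset.sum_ite_eq]
          simp
      _ = ∑ i : Fin N, ∑ m : Fin M, ∑ m' : Fin M,
            (εc ^ 2 * sc ^ 2 * w * Qf (i, m) + εc ^ 2 * sc ^ 2 * w * Qf (i, m')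
              + sc ^ 4 * w ^ 2) := by
          refine Finset.sum_congr rfl fun i _ => Finset.sum_congr rfl fun m _ =>
            Finset.sum_congr rfl fun m' _ => ?_
          simp only [hv]
          ring
      _ = (∑ i : Fin N, ∑ m : Fin M, ∑ m' : Fin M, εc ^ 2 * sc ^ 2 * w * Qf (i, m))
          + (∑ i : Fin N, ∑ m : Fin M, ∑ m' : Fin M, εc ^ 2 * sc ^ 2 * w * Qf (i, m'))
          + (∑ i : Fin N, ∑ m : Fin M, ∑ m' : Fin M, (sc ^ 4 * w ^ 2 : ℂ)) := by
          simp only [Finset.sum_add_distrib]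
      _ = εc ^ 2 * sc ^ 2 * w * (∑ i : Fin N, ∑ m : Fin M, ∑ m' : Fin M, Qf (i, m))
          + εc ^ 2 * sc ^ 2 * w * (∑ i : Fin N, ∑ m : Fin M, ∑ m' : Fin M, Qf (i, m'))
          + ((N : ℂ) * M * M) * (sc ^ 4 * w ^ 2) := by
          simp only [← Finset.mul_sum, Finset.sum_const, Finset.card_univ, Fintype.card_fin,
            nsmul_eq_mul]
          ring
      _ = 2 * M * (εc ^ 2 * sc ^ 2 * w) + (N * M * M) * (sc ^ 4 * w ^ 2) := by
          rw [hsum_c, hsum_d]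
          ring
  -- assemble the complex expectation
  have hbig : ∫ ω, (∑ i : Fin N, ∑ j : Fin N, A i j ω * star (A i j ω)) ∂μ
      = εc ^ 4 * ((π₀ : ℝ) : ℂ)
        + (2 * N * (εc ^ 2 * sc ^ 2 * w) + (N * N * M) * (sc ^ 4 * w ^ 2))
        + (2 * M * (εc ^ 2 * sc ^ 2 * w) + (N * M * M) * (sc ^ 4 * w ^ 2)) := by
    rw [step2]
    calc ∑ i : Fin N, ∑ j : Fin N, ∫ ω, A i j ω * star (A i j ω) ∂μ
        = ∑ i : Fin N, ∑ j : Fin N, ∑ m : Fin M, ∑ m' : Fin M,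
            ∫ ω, (Y (i, m) ω * star (Y (j, m) ω)) * (Y (j, m') ω * star (Y (i, m') ω)) ∂μ :=
          Finset.sum_congr rfl fun i _ => Finset.sum_congr rfl fun j _ => step3 i j
      _ = ∑ i : Fin N, ∑ j : Fin N, ∑ m : Fin M, ∑ m' : Fin M,
            (εc ^ 4 * ((φ₀ (i, m) * star (φ₀ (j, m))) * (φ₀ (j, m') * star (φ₀ (i, m'))))
              + (if m = m' then v (i, m) * v (j, m) - εc ^ 4 * (Qf (i, m) * Qf (j, m)) else 0)
              + (if i = j then v (i, m) * v (i, m')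
                  - εc ^ 4 * (Qf (i, m) * Qf (i, m')) else 0)) :=
          Finset.sum_congr rfl fun i _ => Finset.sum_congr rfl fun j _ =>
            Finset.sum_congr rfl fun m _ => Finset.sum_congr rfl fun m' _ => hval i j m m'
      _ = (∑ i : Fin N, ∑ j : Fin N, ∑ m : Fin M, ∑ m' : Fin M,
            εc ^ 4 * ((φ₀ (i, m) * star (φ₀ (j, m))) * (φ₀ (j, m') * star (φ₀ (i, m')))))
          + (∑ i : Fin N, ∑ j : Fin N, ∑ m : Fin M, ∑ m' : Fin M,
            (if m = m' then v (i, m) * v (j, m) - εc ^ 4 * (Qf (i, m) * Qf (j, m)) else 0))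
          + (∑ i : Fin N, ∑ j : Fin N, ∑ m : Fin M, ∑ m' : Fin M,
            (if i = j then v (i, m) * v (i, m')
              - εc ^ 4 * (Qf (i, m) * Qf (i, m')) else 0)) := by
          simp only [Finset.sum_add_distrib]
      _ = εc ^ 4 * ((π₀ : ℝ) : ℂ)
          + (2 * N * (εc ^ 2 * sc ^ 2 * w) + (N * N * M) * (sc ^ 4 * w ^ 2))
          + (2 * M * (εc ^ 2 * sc ^ 2 * w) + (N * M * M) * (sc ^ 4 * w ^ 2)) := by
          rw [hT1, hT2, hT3]
  -- final real computation
  have hNne : ((N : ℝ)) ≠ 0 := Nat.cast_ne_zero.mpr hN.ne'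
  have hMne : ((M : ℝ)) ≠ 0 := Nat.cast_ne_zero.mpr hM.ne'
  have hmirror : εc ^ 4 * ((π₀ : ℝ) : ℂ)
      + (2 * N * (εc ^ 2 * sc ^ 2 * w) + (N * N * M) * (sc ^ 4 * w ^ 2))
      + (2 * M * (εc ^ 2 * sc ^ 2 * w) + (N * M * M) * (sc ^ 4 * w ^ 2))
      = ((ε ^ 4 * π₀
          + (2 * N * (ε ^ 2 * sR ^ 2 * (1 / ((N : ℝ) * M)))
            + (N * N * M) * (sR ^ 4 * (1 / ((N : ℝ) * M)) ^ 2))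
          + (2 * M * (ε ^ 2 * sR ^ 2 * (1 / ((N : ℝ) * M)))
            + (N * M * M) * (sR ^ 4 * (1 / ((N : ℝ) * M)) ^ 2)) : ℝ) : ℂ) := by
    rw [hεc, hsc, hw]
    push_cast
    ring
  have hRB : ε ^ 4 * π₀
      + (2 * N * (ε ^ 2 * sR ^ 2 * (1 / ((N : ℝ) * M)))
        + (N * N * M) * (sR ^ 4 * (1 / ((N : ℝ) * M)) ^ 2))
      + (2 * M * (ε ^ 2 * sR ^ 2 * (1 / ((N : ℝ) * M)))
        + (N * M * M) * (sR ^ 4 * (1 / ((N : ℝ) * M)) ^ 2))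
      = ε ^ 4 * π₀ + (1 - ε ^ 4) * (((M : ℝ) + N) / ((M : ℝ) * N)) := by
    rw [show sR ^ 4 = (sR ^ 2) ^ 2 from by ring, hsR2]
    field_simp
    ring
  calc ∫ ω, purity (ψ ω) ∂μ
      = ∫ ω, (∑ i : Fin N, ∑ j : Fin N, A i j ω * star (A i j ω)).re ∂μ :=
        integral_congr_ae (Filter.Eventually.of_forall fun ω => hpure ω)
    _ = (∫ ω, (∑ i : Fin N, ∑ j : Fin N, A i j ω * star (A i j ω)) ∂μ).re := by
        simpa using integral_re hGint
    _ = ε ^ 4 * π₀ + (1 - ε ^ 4) * (((M : ℝ) + N) / ((M : ℝ) * N)) := by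
        rw [hbig, hmirror, Complex.ofReal_re, hRB]
end

section
/- (Lubkin's formula) If φ is uniformly distributed on the unit sphere of ℂ^N ⊗ ℂ^M, then E[Tr((Tr_B |φ⟩⟨φ|)²)] = (M+N)/(MN+1). -/
open MeasureTheory ProbabilityTheory Finset
open Complex
set_option linter.unusedSectionVars false

section Aux
variable {Ω : Type*} [MeasurableSpace Ω] {μ : Measure Ω} [IsProbabilityMeasure μ]
variable {ι : Type*} [Fintype ι] [DecidableEq ι]

/-- the monomial function -/
noncomputable def Mo (φ : Ω → ι → ℂ) (a b c d : ι) (ω : Ω) : ℂ :=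
  φ ω a * φ ω b * (starRingEnd ℂ) (φ ω c) * (starRingEnd ℂ) (φ ω d)

noncomputable def m4 (μ : Measure Ω) (φ : Ω → ι → ℂ) (a b c d : ι) : ℂ :=
  ∫ ω, Mo φ a b c d ω ∂μ

variable {φ : Ω → ι → ℂ}

lemma Mo_meas (hmeas : Measurable φ) (a b c d : ι) : Measurable (Mo φ a b c d) := by
  have h : ∀ e : ι, Measurable fun ω => φ ω e := fun e => (measurable_pi_apply e).comp hmeas
  exact (((h a).mul (h b)).mul ((Complex.continuous_conj.measurable).comp (h c))).mul
    ((Complex.continuous_conj.measurable).comp (h d))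

lemma norm_bound (hnorm : ∀ᵐ ω ∂μ, ∑ a : ι, ‖φ ω a‖ ^ 2 = 1) :
    ∀ᵐ ω ∂μ, ∀ a : ι, ‖φ ω a‖ ≤ 1 := by
  filter_upwards [hnorm] with ω h a
  have h1 : ‖φ ω a‖ ^ 2 ≤ 1 := by
    rw [← h]
    exact Finset.single_le_sum (f := fun a => ‖φ ω a‖ ^ 2) (fun i _ => by positivity) (mem_univ a)
  nlinarith [norm_nonneg (φ ω a)]

lemma Mo_int (hmeas : Measurable φ) (hnorm : ∀ᵐ ω ∂μ, ∑ a : ι, ‖φ ω a‖ ^ 2 = 1)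
    (a b c d : ι) : Integrable (Mo φ a b c d) μ := by
  refine (integrable_const (1 : ℝ)).mono' (Mo_meas hmeas a b c d).aestronglyMeasurable ?_
  filter_upwards [norm_bound hnorm] with ω h
  have : ∀ e : ι, ‖(starRingEnd ℂ) (φ ω e)‖ ≤ 1 := fun e => by

    simpa using h e
  have heq : ‖Mo φ a b c d ω‖ = ‖φ ω a‖ * ‖φ ω b‖ * ‖φ ω c‖ * ‖φ ω d‖ := by simp [Mo, norm_mul]
  rw [heq]
  calc ‖φ ω a‖ * ‖φ ω b‖ * ‖φ ω c‖ * ‖φ ω d‖ ≤ 1 * 1 * 1 * 1 := by gcongr <;> exact h _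
    _ = 1 := by norm_num

lemma key_inv (hmeas : Measurable φ)
    (hinv : ∀ U ∈ Matrix.unitaryGroup ι ℂ,
      Measure.map (fun ω => U.mulVec (φ ω)) μ = Measure.map φ μ)
    (f : (ι → ℂ) → ℂ) (hf : Continuous f)
    (U : Matrix ι ι ℂ) (hU : U ∈ Matrix.unitaryGroup ι ℂ) :
    ∫ ω, f (U.mulVec (φ ω)) ∂μ = ∫ ω, f (φ ω) ∂μ := by
  have hg : Measurable fun ω => U.mulVec (φ ω) :=
    (Continuous.matrix_mulVec continuous_const continuous_id).measurable.comp hmeas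
  rw [← integral_map hg.aemeasurable hf.aestronglyMeasurable, hinv U hU,
    integral_map hmeas.aemeasurable hf.aestronglyMeasurable]

lemma Mo_cont (a b c d : ι) :
    Continuous fun v : ι → ℂ => v a * v b * (starRingEnd ℂ) (v c) * (starRingEnd ℂ) (v d) := by
  exact (((continuous_apply a).mul (continuous_apply b)).mul
    (Complex.continuous_conj.comp (continuous_apply c))).mul
    (Complex.continuous_conj.comp (continuous_apply d))


/-- phase factor -/
noncomputable def ph (e x : ι) : ℂ := if x = e then Complex.I else 1

lemma phase_unitary (e : ι) :
    Matrix.diagonal (ph e) ∈ Matrix.unitaryGroup ι ℂ := by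
  rw [Matrix.mem_unitaryGroup_iff]
  have : star (Matrix.diagonal (ph e)) = Matrix.diagonal (star (ph e)) :=
    Matrix.diagonal_conjTranspose (ph e)
  rw [this, Matrix.diagonal_mul_diagonal]
  have : (fun x => ph e x * star (ph e) x) = fun _ => (1 : ℂ) := by
    funext x
    simp only [ph, Pi.star_apply]
    split_ifs <;> simp [Complex.conj_I]
  rw [this, Matrix.diagonal_one]

lemma phase_eq (hmeas : Measurable φ)
    (hinv : ∀ U ∈ Matrix.unitaryGroup ι ℂ,
      Measure.map (fun ω => U.mulVec (φ ω)) μ = Measure.map φ μ)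
    (a b c d e : ι) :
    ph e a * ph e b * (starRingEnd ℂ) (ph e c) * (starRingEnd ℂ) (ph e d) * m4 μ φ a b c d
      = m4 μ φ a b c d := by
  have h := key_inv hmeas hinv _ (Mo_cont a b c d) _ (phase_unitary e)
  have hpt : ∀ v : ι → ℂ,
      ((Matrix.diagonal (ph e)).mulVec v) a * ((Matrix.diagonal (ph e)).mulVec v) b *
        (starRingEnd ℂ) (((Matrix.diagonal (ph e)).mulVec v) c) *
        (starRingEnd ℂ) (((Matrix.diagonal (ph e)).mulVec v) d)
      = ph e a * ph e b * (starRingEnd ℂ) (ph e c) * (starRingEnd ℂ) (ph e d) *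
        (v a * v b * (starRingEnd ℂ) (v c) * (starRingEnd ℂ) (v d)) := by
    intro v
    simp only [Matrix.mulVec_diagonal, map_mul]
    ring
  simp only [hpt] at h
  rw [integral_const_mul] at h
  exact h

lemma phase_vanish (hmeas : Measurable φ)
    (hinv : ∀ U ∈ Matrix.unitaryGroup ι ℂ,
      Measure.map (fun ω => U.mulVec (φ ω)) μ = Measure.map φ μ)
    {a b c d : ι} (e : ι)
    (h : ph e a * ph e b * (starRingEnd ℂ) (ph e c) * (starRingEnd ℂ) (ph e d) ≠ 1) :
    m4 μ φ a b c d = 0 := by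
  have h2 := phase_eq hmeas hinv a b c d e
  by_contra hne
  apply h
  have := mul_right_cancel₀ hne (h2.trans (one_mul (m4 μ φ a b c d)).symm)
  exact this

noncomputable def cc : ℂ := ((Real.sqrt 2)⁻¹ : ℝ)

lemma cc_conj : (starRingEnd ℂ) cc = cc := Complex.conj_ofReal _

lemma cc_sq : cc * cc = 1 / 2 := by
  unfold cc
  rw [← Complex.ofReal_mul, ← mul_inv, Real.mul_self_sqrt (by norm_num)]
  norm_num

noncomputable def Had (a b : ι) : Matrix ι ι ℂ := Matrix.of fun x y =>
  if x = a then (if y = a then cc else if y = b then cc else 0)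
  else if x = b then (if y = a then cc else if y = b then -cc else 0)
  else if y = x then 1 else 0

lemma sum_two {a b : ι} (hab : a ≠ b) (c1 c2 : ℂ) (w : ι → ℂ) :
    ∑ y, (if y = a then c1 else if y = b then c2 else 0) * w y = c1 * w a + c2 * w b := by
  have : ∀ y : ι, (if y = a then c1 else if y = b then c2 else 0) * w y
      = (if y = a then c1 * w y else 0) + (if y = b then c2 * w y else 0) := by
    intro y
    by_cases h1 : y = a <;> by_cases h2 : y = b <;>
      first
      | (exfalso; exact hab (h1 ▸ h2 ▸ rfl))
      | simp [h1, h2, hab, Ne.symm hab]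
  simp only [this, Finset.sum_add_distrib, Finset.sum_ite_eq' univ, mem_univ, if_true]

lemma sum_one (x : ι) (w : ι → ℂ) :
    ∑ y, (if y = x then (1:ℂ) else 0) * w y = w x := by
  have : ∀ y : ι, (if y = x then (1:ℂ) else 0) * w y = (if y = x then w y else 0) := by
    intro y; split_ifs <;> simp
  simp only [this, Finset.sum_ite_eq' univ, mem_univ, if_true]

lemma had_row_a {a b : ι} (y : ι) :
    Had a b a y = if y = a then cc else if y = b then cc else 0 := by
  show (if a = a then _ else _) = _
  rw [if_pos rfl]

lemma had_row_b {a b : ι} (hab : a ≠ b) (y : ι) :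
    Had a b b y = if y = a then cc else if y = b then -cc else 0 := by
  show (if b = a then _ else if b = b then _ else _) = _
  rw [if_neg (Ne.symm hab), if_pos rfl]

lemma had_row_other {a b x : ι} (hxa : x ≠ a) (hxb : x ≠ b) (y : ι) :
    Had a b x y = if y = x then 1 else 0 := by
  show (if x = a then _ else if x = b then _ else _) = _
  rw [if_neg hxa, if_neg hxb]

lemma had_mulVec {a b : ι} (hab : a ≠ b) (v : ι → ℂ) :
    (Had a b).mulVec v = fun x =>
      if x = a then cc * (v a + v b) else if x = b then cc * (v a - v b) else v x := by
  funext x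
  show ∑ y, Had a b x y * v y = _
  by_cases hxa : x = a
  · subst hxa
    simp only [had_row_a, eq_self_iff_true, if_true]
    rw [sum_two hab]
    ring
  · by_cases hxb : x = b
    · subst hxb
      simp only [had_row_b hab, if_neg hxa, eq_self_iff_true, if_true]
      rw [sum_two hab]
      ring
    · simp only [had_row_other hxa hxb]
      rw [if_neg hxa, if_neg hxb, sum_one]

lemma had_invol {a b : ι} (hab : a ≠ b) (v : ι → ℂ) :
    (Had a b).mulVec ((Had a b).mulVec v) = v := by
  conv_lhs => rw [had_mulVec hab, had_mulVec hab]
  funext x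
  by_cases hxa : x = a
  · subst hxa
    simp only [eq_self_iff_true, if_true, if_neg (Ne.symm hab)]
    linear_combination (2 * v x) * cc_sq
  · by_cases hxb : x = b
    · subst hxb
      simp only [if_neg hxa, eq_self_iff_true, if_true]
      linear_combination (2 * v x) * cc_sq
    · simp only [if_neg hxa, if_neg hxb]

lemma had_symm {a b : ι} (hab : a ≠ b) : star (Had a b) = Had a b := by
  ext x z
  show (starRingEnd ℂ) (Had a b z x) = Had a b x z
  simp only [Had, Matrix.of_apply]
  by_cases hxa : x = a <;> by_cases hxb : x = b <;> by_cases hza : z = a <;>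
    by_cases hzb : z = b <;>
    simp_all [cc_conj, hab, Ne.symm hab, eq_comm]

lemma had_unitary {a b : ι} (hab : a ≠ b) : Had a b ∈ Matrix.unitaryGroup ι ℂ := by
  rw [Matrix.mem_unitaryGroup_iff, had_symm hab]
  ext x z
  calc (Had a b * Had a b) x z
      = ((Had a b * Had a b).mulVec (Pi.single z 1 : ι → ℂ)) x := by
        rw [Matrix.mulVec_single]; simp
    _ = ((Had a b).mulVec ((Had a b).mulVec (Pi.single z 1 : ι → ℂ))) x := by
        rw [Matrix.mulVec_mulVec]
    _ = (Pi.single z 1 : ι → ℂ) x := by rw [had_invol hab]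
    _ = (1 : Matrix ι ι ℂ) x z := by
        simp [Matrix.one_apply, Pi.single_apply]

lemma integral_quad (hmeas : Measurable φ) (hnorm : ∀ᵐ ω ∂μ, ∑ a : ι, ‖φ ω a‖ ^ 2 = 1)
    (s : Finset ι) (k : ι → ι → ι → ι → ℂ) :
    ∫ ω, ∑ x ∈ s, ∑ y ∈ s, ∑ z ∈ s, ∑ w ∈ s, k x y z w * Mo φ x y z w ω ∂μ
      = ∑ x ∈ s, ∑ y ∈ s, ∑ z ∈ s, ∑ w ∈ s, k x y z w * m4 μ φ x y z w := by
  rw [integral_finset_sum s (fun x _ => integrable_finset_sum s (fun y _ =>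
    integrable_finset_sum s (fun z _ => integrable_finset_sum s (fun w _ =>
    (Mo_int hmeas hnorm x y z w).const_mul _))))]
  refine Finset.sum_congr rfl fun x _ => ?_
  rw [integral_finset_sum s (fun y _ => integrable_finset_sum s (fun z _ =>
    integrable_finset_sum s (fun w _ => (Mo_int hmeas hnorm x y z w).const_mul _)))]
  refine Finset.sum_congr rfl fun y _ => ?_
  rw [integral_finset_sum s (fun z _ => integrable_finset_sum s (fun w _ =>
    (Mo_int hmeas hnorm x y z w).const_mul _))]
  refine Finset.sum_congr rfl fun z _ => ?_
  rw [integral_finset_sum s (fun w _ => (Mo_int hmeas hnorm x y z w).const_mul _)]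
  refine Finset.sum_congr rfl fun w _ => ?_
  exact integral_const_mul _ _

lemma m4_swap_mid (a b : ι) : m4 μ φ a b b a = m4 μ φ a b a b := by
  unfold m4
  congr 1
  funext ω
  unfold Mo
  ring

lemma m4_swap_pair (a b : ι) : m4 μ φ b a a b = m4 μ φ a b a b := by
  unfold m4; congr 1; funext ω; unfold Mo; ring

lemma m4_swap_both (a b : ι) : m4 μ φ b a b a = m4 μ φ a b a b := by
  unfold m4; congr 1; funext ω; unfold Mo; ring

lemma had_eq (hmeas : Measurable φ) (hnorm : ∀ᵐ ω ∂μ, ∑ a : ι, ‖φ ω a‖ ^ 2 = 1)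
    (hinv : ∀ U ∈ Matrix.unitaryGroup ι ℂ,
      Measure.map (fun ω => U.mulVec (φ ω)) μ = Measure.map φ μ)
    {a b : ι} (hab : a ≠ b) :
    m4 μ φ a a a a = m4 μ φ b b b b ∧ m4 μ φ a a a a = 2 * m4 μ φ a b a b := by
  have hba := Ne.symm hab
  have z1 : m4 μ φ a a a b = 0 := phase_vanish hmeas hinv b (by
    intro h; norm_num [ph, hab, hba, Complex.ext_iff] at h)
  have z2 : m4 μ φ a a b a = 0 := phase_vanish hmeas hinv b (by
    intro h; norm_num [ph, hab, hba, Complex.ext_iff] at h)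
  have z3 : m4 μ φ a b a a = 0 := phase_vanish hmeas hinv b (by
    intro h; norm_num [ph, hab, hba, Complex.ext_iff] at h)
  have z4 : m4 μ φ b a a a = 0 := phase_vanish hmeas hinv b (by
    intro h; norm_num [ph, hab, hba, Complex.ext_iff] at h)
  have z5 : m4 μ φ a a b b = 0 := phase_vanish hmeas hinv b (by
    intro h; norm_num [ph, hab, hba, Complex.ext_iff] at h)
  have z6 : m4 μ φ b b a a = 0 := phase_vanish hmeas hinv b (by
    intro h; norm_num [ph, hab, hba, Complex.ext_iff] at h)
  have z7 : m4 μ φ b b b a = 0 := phase_vanish hmeas hinv a (by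
    intro h; norm_num [ph, hab, hba, Complex.ext_iff] at h)
  have z8 : m4 μ φ b b a b = 0 := phase_vanish hmeas hinv a (by
    intro h; norm_num [ph, hab, hba, Complex.ext_iff] at h)
  have z9 : m4 μ φ b a b b = 0 := phase_vanish hmeas hinv a (by
    intro h; norm_num [ph, hab, hba, Complex.ext_iff] at h)
  have z10 : m4 μ φ a b b b = 0 := phase_vanish hmeas hinv a (by
    intro h; norm_num [ph, hab, hba, Complex.ext_iff] at h)
  have cc4 : cc ^ 4 = 1/4 := by
    rw [show cc ^ 4 = (cc * cc) * (cc * cc) by ring, cc_sq]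
    norm_num
  have ha := key_inv hmeas hinv
    (fun v => v a * v a * (starRingEnd ℂ) (v a) * (starRingEnd ℂ) (v a))
    (Mo_cont a a a a) _ (had_unitary hab)
  have hpta : ∀ ω : Ω, (fun v : ι → ℂ =>
        v a * v a * (starRingEnd ℂ) (v a) * (starRingEnd ℂ) (v a)) ((Had a b).mulVec (φ ω))
      = cc ^ 4 * ∑ x ∈ ({a, b} : Finset ι), ∑ y ∈ ({a, b} : Finset ι),
          ∑ z ∈ ({a, b} : Finset ι), ∑ w ∈ ({a, b} : Finset ι),
          (1 : ℂ) * Mo φ x y z w ω := by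
    intro ω
    rw [had_mulVec hab]
    simp only [Finset.sum_pair hab, eq_self_iff_true, if_true, Mo, map_mul, map_add,
      cc_conj, one_mul]
    ring
  simp only [hpta] at ha
  rw [integral_const_mul, integral_quad hmeas hnorm] at ha
  simp only [Finset.sum_pair hab, one_mul] at ha
  rw [z1, z2, z3, z4, z5, z6, z7, z8, z9, z10, m4_swap_mid a b, m4_swap_pair a b,
    m4_swap_both a b, cc4] at ha
  have hra : (∫ ω, φ ω a * φ ω a * (starRingEnd ℂ) (φ ω a) * (starRingEnd ℂ) (φ ω a) ∂μ)
      = m4 μ φ a a a a := rfl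
  rw [hra] at ha
  have hb := key_inv hmeas hinv
    (fun v => v b * v b * (starRingEnd ℂ) (v b) * (starRingEnd ℂ) (v b))
    (Mo_cont b b b b) _ (had_unitary hab)
  have hptb : ∀ ω : Ω, (fun v : ι → ℂ =>
        v b * v b * (starRingEnd ℂ) (v b) * (starRingEnd ℂ) (v b)) ((Had a b).mulVec (φ ω))
      = cc ^ 4 * ∑ x ∈ ({a, b} : Finset ι), ∑ y ∈ ({a, b} : Finset ι),
          ∑ z ∈ ({a, b} : Finset ι), ∑ w ∈ ({a, b} : Finset ι),
          ((if x = b then (-1:ℂ) else 1) * (if y = b then (-1:ℂ) else 1) *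
           (if z = b then (-1:ℂ) else 1) * (if w = b then (-1:ℂ) else 1)) * Mo φ x y z w ω := by
    intro ω
    rw [had_mulVec hab]
    simp only [Finset.sum_pair hab, eq_self_iff_true, if_true, if_neg hab, if_neg hba,
      Mo, map_mul, map_add, map_sub, cc_conj]
    ring
  simp only [hptb] at hb
  rw [integral_const_mul, integral_quad hmeas hnorm] at hb
  simp only [Finset.sum_pair hab, eq_self_iff_true, if_true, if_neg hab, if_neg hba] at hb
  rw [z1, z2, z3, z4, z5, z6, z7, z8, z9, z10, m4_swap_mid a b, m4_swap_pair a b,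
    m4_swap_both a b, cc4] at hb
  have hrb : (∫ ω, φ ω b * φ ω b * (starRingEnd ℂ) (φ ω b) * (starRingEnd ℂ) (φ ω b) ∂μ)
      = m4 μ φ b b b b := rfl
  rw [hrb] at hb
  constructor
  · linear_combination -ha + hb
  · linear_combination (-3/2 : ℂ) * ha + (-1/2 : ℂ) * hb

lemma norm_sum (hmeas : Measurable φ) (hnorm : ∀ᵐ ω ∂μ, ∑ a : ι, ‖φ ω a‖ ^ 2 = 1) :
    ∑ a : ι, ∑ b : ι, m4 μ φ a b a b = 1 := by
  have hae : ∀ᵐ ω ∂μ, ∑ a : ι, ∑ b : ι, Mo φ a b a b ω = 1 := by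
    filter_upwards [hnorm] with ω h
    have hpt : ∀ a b : ι, Mo φ a b a b ω = ((‖φ ω a‖ ^ 2 * ‖φ ω b‖ ^ 2 : ℝ) : ℂ) := by
      intro a b
      have h1 : φ ω a * φ ω b * (starRingEnd ℂ) (φ ω a) * (starRingEnd ℂ) (φ ω b)
          = (φ ω a * (starRingEnd ℂ) (φ ω a)) * (φ ω b * (starRingEnd ℂ) (φ ω b)) := by ring
      rw [Mo, h1, Complex.mul_conj, Complex.mul_conj]
      rw [Complex.normSq_eq_norm_sq, Complex.normSq_eq_norm_sq, Complex.ofReal_mul]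
    calc ∑ a : ι, ∑ b : ι, Mo φ a b a b ω
        = ∑ a : ι, ∑ b : ι, ((‖φ ω a‖ ^ 2 * ‖φ ω b‖ ^ 2 : ℝ) : ℂ) := by
          exact Finset.sum_congr rfl fun a _ => Finset.sum_congr rfl fun b _ => hpt a b
      _ = (((∑ a : ι, ‖φ ω a‖ ^ 2) * (∑ b : ι, ‖φ ω b‖ ^ 2) : ℝ) : ℂ) := by
          push_cast
          rw [Finset.sum_mul]
          exact Finset.sum_congr rfl fun a _ => by rw [Finset.mul_sum]
      _ = 1 := by rw [h]; norm_num
  have h1 : ∑ a : ι, ∑ b : ι, m4 μ φ a b a b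
      = ∫ ω, ∑ a : ι, ∑ b : ι, Mo φ a b a b ω ∂μ := by
    rw [integral_finset_sum univ (fun a _ => integrable_finset_sum univ
      (fun b _ => Mo_int hmeas hnorm a b a b))]
    refine Finset.sum_congr rfl fun a _ => ?_
    rw [integral_finset_sum univ (fun b _ => Mo_int hmeas hnorm a b a b)]
    rfl
  rw [h1, integral_congr_ae hae]
  simp

lemma p_val (hmeas : Measurable φ) (hnorm : ∀ᵐ ω ∂μ, ∑ a : ι, ‖φ ω a‖ ^ 2 = 1)
    (hinv : ∀ U ∈ Matrix.unitaryGroup ι ℂ,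
      Measure.map (fun ω => U.mulVec (φ ω)) μ = Measure.map φ μ) (a : ι) :
    m4 μ φ a a a a = 2 / ((Fintype.card ι : ℂ) * ((Fintype.card ι : ℂ) + 1)) := by
  have hns := norm_sum hmeas hnorm
  by_cases hone : ∀ b : ι, b = a
  · have hu : (univ : Finset ι) = {a} := by
      ext x; simp [hone x]
    rw [hu, Finset.sum_singleton, Finset.sum_singleton] at hns
    have hc : Fintype.card ι = 1 := Fintype.card_eq_one_iff.mpr ⟨a, hone⟩
    rw [hns, hc]
    norm_num
  · push_neg at hone
    obtain ⟨b, hb⟩ := hone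
    set n := Fintype.card ι with hn
    have hppp : ∀ x : ι, m4 μ φ x x x x = m4 μ φ a a a a := by
      intro x
      by_cases hx : x = a
      · rw [hx]
      · exact (had_eq hmeas hnorm hinv hx).1
    have hq : ∀ x y : ι, x ≠ y → m4 μ φ x y x y = m4 μ φ a a a a / 2 := by
      intro x y hxy
      have h2 := (had_eq hmeas hnorm hinv hxy).2
      rw [hppp x] at h2
      linear_combination -h2 / 2
    have hrow : ∀ x : ι, ∑ y : ι, m4 μ φ x y x y
        = m4 μ φ a a a a + ((n : ℂ) - 1) * (m4 μ φ a a a a / 2) := by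
      intro x
      rw [← Finset.add_sum_erase univ _ (mem_univ x), hppp x]
      congr 1
      rw [Finset.sum_congr rfl (fun y hy => hq x y (Ne.symm (Finset.ne_of_mem_erase hy)))]
      rw [Finset.sum_const, Finset.card_erase_of_mem (mem_univ x), Finset.card_univ, ← hn]
      rw [nsmul_eq_mul]
      congr 1
      have hn1 : 1 ≤ n := Fintype.card_pos_iff.mpr ⟨a⟩
      push_cast [Nat.cast_sub hn1]
      ring
    rw [Finset.sum_congr rfl (fun x _ => hrow x), Finset.sum_const, Finset.card_univ, ← hn,
      nsmul_eq_mul] at hns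
    have hn0 : (n : ℂ) ≠ 0 := by
      have hpos : 0 < n := Fintype.card_pos_iff.mpr ⟨a⟩
      exact Nat.cast_ne_zero.mpr (by omega)
    have hn1 : (n : ℂ) + 1 ≠ 0 := by
      have : ((n + 1 : ℕ) : ℂ) ≠ 0 := Nat.cast_ne_zero.mpr (Nat.succ_ne_zero n)
      push_cast at this
      exact this
    field_simp
    linear_combination 2 * hns

lemma q_val (hmeas : Measurable φ) (hnorm : ∀ᵐ ω ∂μ, ∑ a : ι, ‖φ ω a‖ ^ 2 = 1)
    (hinv : ∀ U ∈ Matrix.unitaryGroup ι ℂ,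
      Measure.map (fun ω => U.mulVec (φ ω)) μ = Measure.map φ μ)
    {a b : ι} (hab : a ≠ b) :
    m4 μ φ a b a b = 1 / ((Fintype.card ι : ℂ) * ((Fintype.card ι : ℂ) + 1)) := by
  have h2 := (had_eq hmeas hnorm hinv hab).2
  rw [p_val hmeas hnorm hinv a] at h2
  linear_combination -h2 / 2

end Aux

lemma fin_sum_ite {n : ℕ} (m : Fin n) (X Y : ℂ) :
    ∑ m' : Fin n, (if m = m' then X else Y) = X + ((n : ℂ) - 1) * Y := by
  rw [← Finset.add_sum_erase univ _ (mem_univ m), if_pos rfl]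
  congr 1
  rw [Finset.sum_congr rfl (fun y hy => if_neg (Ne.symm (Finset.ne_of_mem_erase hy)))]
  rw [Finset.sum_const, Finset.card_erase_of_mem (mem_univ m), Finset.card_univ,
    Fintype.card_fin, nsmul_eq_mul]
  have h1 : 1 ≤ n := m.pos
  push_cast [Nat.cast_sub h1]
  ring



/-- Lubkin's formula: If `φ` is uniformly distributed on the unit sphere of
`ℂ^N ⊗ ℂ^M` (unitarily invariant law, a.s. unit norm), then the expected local purity
`E[Tr((Tr_B |φ⟩⟨φ|)²)] = ∑_{i,j} E[‖∑_μ φ_{iμ} conj(φ_{jμ})‖²]` equals `(M+N)/(MN+1)`. -/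
theorem lubkin_formula {Ω : Type*} [MeasurableSpace Ω] {μ : Measure Ω}
    [IsProbabilityMeasure μ] (N M : ℕ) (hN : 0 < N) (hM : 0 < M)
    (φ : Ω → Fin N × Fin M → ℂ) (hmeas : Measurable φ)
    (hnorm : ∀ᵐ ω ∂μ, ∑ a : Fin N × Fin M, ‖φ ω a‖ ^ 2 = 1)
    (hinv : ∀ U ∈ Matrix.unitaryGroup (Fin N × Fin M) ℂ,
      Measure.map (fun ω => U.mulVec (φ ω)) μ = Measure.map φ μ) :
    ∫ ω, (∑ i : Fin N, ∑ j : Fin N,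
        ‖∑ m : Fin M, φ ω (i, m) * star (φ ω (j, m))‖ ^ 2) ∂μ
      = ((M : ℝ) + N) / ((M : ℝ) * N + 1) := by
  have hcard : (Fintype.card (Fin N × Fin M) : ℂ) = (N : ℂ) * (M : ℂ) := by
    rw [Fintype.card_prod, Fintype.card_fin, Fintype.card_fin]
    push_cast
    ring
  set K : ℂ := 1 / ((Fintype.card (Fin N × Fin M) : ℂ) *
    ((Fintype.card (Fin N × Fin M) : ℂ) + 1)) with hK
  -- classification of the fourth moments
  have hval : ∀ (i j : Fin N) (m m' : Fin M),
      m4 μ φ (i, m) (j, m') (j, m) (i, m')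
        = if i = j then (if m = m' then 2 * K else K) else (if m = m' then K else 0) := by
    intro i j m m'
    by_cases hij : i = j
    · by_cases hmm : m = m'
      · subst hij; subst hmm
        rw [if_pos rfl, if_pos rfl, p_val hmeas hnorm hinv, hK]
        ring
      · subst hij
        rw [if_pos rfl, if_neg hmm, q_val hmeas hnorm hinv
          (by simp [Prod.ext_iff, hmm]), hK]
    · by_cases hmm : m = m'
      · subst hmm
        rw [if_neg hij, if_pos rfl, m4_swap_mid, q_val hmeas hnorm hinv
          (by simp [Prod.ext_iff, hij]), hK]
      · have hji : ¬ j = i := fun h => hij h.symm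
        have hmm' : ¬ m' = m := fun h => hmm h.symm
        rw [if_neg hij, if_neg hmm]
        refine phase_vanish hmeas hinv ((i, m)) ?_
        intro h
        norm_num [ph, Prod.ext_iff, hij, hmm, hji, hmm', Complex.ext_iff] at h
  -- the complex integrand
  have hT : ∀ ω : Ω, (∑ i : Fin N, ∑ j : Fin N,
        ‖∑ m : Fin M, φ ω (i, m) * star (φ ω (j, m))‖ ^ 2 : ℝ)
      = (∑ i : Fin N, ∑ j : Fin N, ∑ m : Fin M, ∑ m' : Fin M,
          Mo φ (i, m) (j, m') (j, m) (i, m') ω).re := by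
    intro ω
    rw [Complex.re_sum]
    refine Finset.sum_congr rfl fun i _ => ?_
    rw [Complex.re_sum]
    refine Finset.sum_congr rfl fun j _ => ?_
    set S : ℂ := ∑ m : Fin M, φ ω (i, m) * star (φ ω (j, m)) with hS
    have h1 : ∑ m : Fin M, ∑ m' : Fin M, Mo φ (i, m) (j, m') (j, m) (i, m') ω
        = S * (starRingEnd ℂ) S := by
      rw [hS, map_sum, Finset.sum_mul]
      refine Finset.sum_congr rfl fun m _ => ?_
      rw [Finset.mul_sum]
      refine Finset.sum_congr rfl fun m' _ => ?_
      simp only [Mo, map_mul, Complex.star_def, Complex.conj_conj]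
      ring
    rw [h1, Complex.mul_conj]
    rw [Complex.ofReal_re]
    rw [Complex.normSq_eq_norm_sq]
  -- pass to the complex integral
  rw [integral_congr_ae (Filter.Eventually.of_forall hT)]
  have hTint : Integrable (fun ω => ∑ i : Fin N, ∑ j : Fin N, ∑ m : Fin M, ∑ m' : Fin M,
      Mo φ (i, m) (j, m') (j, m) (i, m') ω) μ :=
    integrable_finset_sum univ fun i _ => integrable_finset_sum univ fun j _ =>
      integrable_finset_sum univ fun m _ => integrable_finset_sum univ fun m' _ =>
        Mo_int hmeas hnorm _ _ _ _
  have hre := integral_re (μ := μ) hTint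
  simp only [RCLike.re_to_complex] at hre
  rw [hre]
  -- compute the complex integral
  have hint : ∫ ω, (∑ i : Fin N, ∑ j : Fin N, ∑ m : Fin M, ∑ m' : Fin M,
      Mo φ (i, m) (j, m') (j, m) (i, m') ω) ∂μ
      = ∑ i : Fin N, ∑ j : Fin N, ∑ m : Fin M, ∑ m' : Fin M,
        m4 μ φ (i, m) (j, m') (j, m) (i, m') := by
    rw [integral_finset_sum univ (fun i _ => integrable_finset_sum univ fun j _ =>
      integrable_finset_sum univ fun m _ => integrable_finset_sum univ fun m' _ =>
        Mo_int hmeas hnorm _ _ _ _)]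
    refine Finset.sum_congr rfl fun i _ => ?_
    rw [integral_finset_sum univ (fun j _ => integrable_finset_sum univ fun m _ =>
      integrable_finset_sum univ fun m' _ => Mo_int hmeas hnorm _ _ _ _)]
    refine Finset.sum_congr rfl fun j _ => ?_
    rw [integral_finset_sum univ (fun m _ => integrable_finset_sum univ fun m' _ =>
      Mo_int hmeas hnorm _ _ _ _)]
    refine Finset.sum_congr rfl fun m _ => ?_
    rw [integral_finset_sum univ (fun m' _ => Mo_int hmeas hnorm _ _ _ _)]
    rfl
  rw [hint]
  have hstep1 : ∀ i j : Fin N, ∑ m : Fin M, ∑ m' : Fin M,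
      m4 μ φ (i, m) (j, m') (j, m) (i, m')
      = if i = j then ((M : ℂ) + 1) * (M : ℂ) * K else (M : ℂ) * K := by
    intro i j
    by_cases hij : i = j
    · rw [if_pos hij]
      rw [Finset.sum_congr rfl (fun m _ => Finset.sum_congr rfl
        (fun m' _ => (hval i j m m').trans (if_pos hij)))]
      rw [Finset.sum_congr rfl (fun m _ => fin_sum_ite m (2 * K) K)]
      rw [Finset.sum_const, Finset.card_univ, Fintype.card_fin, nsmul_eq_mul]
      ring
    · rw [if_neg hij]
      rw [Finset.sum_congr rfl (fun m _ => Finset.sum_congr rfl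
        (fun m' _ => (hval i j m m').trans (if_neg hij)))]
      rw [Finset.sum_congr rfl (fun m _ => fin_sum_ite m K 0)]
      rw [Finset.sum_const, Finset.card_univ, Fintype.card_fin, nsmul_eq_mul]
      ring
  rw [Finset.sum_congr rfl (fun i _ => Finset.sum_congr rfl (fun j _ => hstep1 i j))]
  rw [Finset.sum_congr rfl (fun i _ => fin_sum_ite i (((M : ℂ) + 1) * (M : ℂ) * K)
    ((M : ℂ) * K))]
  rw [Finset.sum_const, Finset.card_univ, Fintype.card_fin, nsmul_eq_mul]
  -- final arithmetic
  have hNM0 : ((N : ℂ) * (M : ℂ)) ≠ 0 := by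
    have : ((N * M : ℕ) : ℂ) ≠ 0 := Nat.cast_ne_zero.mpr (by positivity)
    push_cast at this
    exact this
  have hNM1 : ((N : ℂ) * (M : ℂ) + 1) ≠ 0 := by
    have : ((N * M + 1 : ℕ) : ℂ) ≠ 0 := Nat.cast_ne_zero.mpr (Nat.succ_ne_zero _)
    push_cast at this
    exact this
  have hMN1 : ((M : ℝ) * N + 1) ≠ 0 := by positivity
  have h1NM : (1 + (N : ℂ) * M) ≠ 0 := by
    have := hNM1; intro h; apply this; linear_combination h
  have harith : (N : ℂ) * ((((M : ℂ) + 1) * (M : ℂ) * K)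
        + ((N : ℂ) - 1) * ((M : ℂ) * K))
      = ((((M : ℝ) + N) / ((M : ℝ) * N + 1) : ℝ) : ℂ) := by
    have hMN1C : ((M : ℂ) * N + 1) ≠ 0 := by
      intro h; apply hNM1; linear_combination h
    rw [hK, hcard]
    push_cast
    rw [eq_div_iff hMN1C]
    field_simp [hNM0, hNM1, h1NM]
    rw [div_eq_iff hNM0]
    ring
  rw [harith, Complex.ofReal_re]
end
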